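/- For the type (A) ILP min {cᵀx : Ax = b, x ≥ 0}, the lower bound of the optimal value set satisfies f̲ = min {c̲ᵀx : A̲x ≤ b̄, −Āx ≤ −b̲, x ≥ 0}. -/

import Mathlib

open Matrix

/-- Membership of a real matrix in the interval matrix `[AL, AU]`. -/
def memI {m n : ℕ} (AL AU A : Matrix (Fin m) (Fin n) ℝ) : Prop :=
  ∀ i j, AL i j ≤ A i j ∧ A i j ≤ AU i j

/-- Optimal value of the primal type-(A) LP `min cᵀx  s.t.  Ax = b, x ≥ 0`. -/
noncomputable def primalValA {m n : ℕ} (A : Matrix (Fin m) (Fin n) ℝ) (b : Fin m → ℝ)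
    (c : Fin n → ℝ) : EReal :=
  sInf ((fun x => ((c ⬝ᵥ x : ℝ) : EReal)) '' {x | A.mulVec x = b ∧ 0 ≤ x})

/-- Optimal value of the dual type-(A) LP `max bᵀy  s.t.  Aᵀy ≤ c`. -/
noncomputable def dualValA {m n : ℕ} (A : Matrix (Fin m) (Fin n) ℝ) (b : Fin m → ℝ)
    (c : Fin n → ℝ) : EReal :=
  sSup ((fun y => ((b ⬝ᵥ y : ℝ) : EReal)) '' {y | Aᵀ.mulVec y ≤ c})

lemma dot_mono {n : ℕ} {c d x : Fin n → ℝ} (h : c ≤ d) (hx : 0 ≤ x) :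
    c ⬝ᵥ x ≤ d ⬝ᵥ x := by
  apply Finset.sum_le_sum
  intro j _
  exact mul_le_mul_of_nonneg_right (h j) (hx j)

/-- The lower bound of the optimal value set of a type (A) ILP equals the
optimal value of the LP `min c̲ᵀx  s.t.  A̲x ≤ b̄, −Āx ≤ −b̲, x ≥ 0`. -/
theorem typeA_lower_bound_eq {m n : ℕ}
    (AL AU : Matrix (Fin m) (Fin n) ℝ) (bL bU : Fin m → ℝ) (cL cU : Fin n → ℝ)
    (hA : ∀ i j, AL i j ≤ AU i j) (hb : bL ≤ bU) (hc : cL ≤ cU) :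
    sInf {v : EReal | ∃ A b c, memI AL AU A ∧ bL ≤ b ∧ b ≤ bU ∧ cL ≤ c ∧ c ≤ cU ∧
        v = primalValA A b c} =
      sInf ((fun x => ((cL ⬝ᵥ x : ℝ) : EReal)) ''
        {x | AL.mulVec x ≤ bU ∧ -(AU.mulVec x) ≤ -bL ∧ 0 ≤ x}) := by
  apply le_antisymm
  · -- LHS ≤ RHS
    apply le_sInf
    rintro v ⟨x, ⟨h1, h2, hx⟩, rfl⟩
    have hL : ∀ i, bL i ≤ AU.mulVec x i := by
      intro i
      have := h2 i
      simpa using this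
    have hALU : ∀ i, AL.mulVec x i ≤ AU.mulVec x i := fun i =>
      dot_mono (fun j => hA i j) hx
    set b : Fin m → ℝ := fun i => max (bL i) (AL.mulVec x i) with hbdef
    have hbAL : ∀ i, AL.mulVec x i ≤ b i := fun i => le_max_right _ _
    have hbAU : ∀ i, b i ≤ AU.mulVec x i := fun i => max_le (hL i) (hALU i)
    have hbL : bL ≤ b := fun i => le_max_left _ _
    have hbU : b ≤ bU := fun i => max_le (hb i) (h1 i)
    set t : Fin m → ℝ := fun i =>
      if AU.mulVec x i - AL.mulVec x i = 0 then 0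
      else (b i - AL.mulVec x i) / (AU.mulVec x i - AL.mulVec x i) with htdef
    have hdpos : ∀ i, AU.mulVec x i - AL.mulVec x i ≠ 0 →
        0 < AU.mulVec x i - AL.mulVec x i := by
      intro i hi
      have := hALU i
      cases (sub_nonneg.2 this).lt_or_eq with
      | inl h => exact h
      | inr h => exact absurd h.symm hi
    have ht0 : ∀ i, 0 ≤ t i := by
      intro i
      simp only [htdef]
      split
      · exact le_refl 0
      · next hi =>
          exact div_nonneg (sub_nonneg.2 (hbAL i)) (hdpos i hi).le
    have ht1 : ∀ i, t i ≤ 1 := by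
      intro i
      simp only [htdef]
      split
      · exact zero_le_one
      · next hi =>
          rw [div_le_one (hdpos i hi)]
          have := hbAU i
          linarith
    set A : Matrix (Fin m) (Fin n) ℝ := fun i j => AL i j + t i * (AU i j - AL i j)
      with hAdef
    have hmem : memI AL AU A := by
      intro i j
      constructor
      · have := mul_nonneg (ht0 i) (sub_nonneg.2 (hA i j))
        simp only [hAdef]
        linarith
      · have h1' := ht1 i
        have h2' := ht0 i
        have h3' := hA i j
        simp only [hAdef]
        nlinarith
    have hAx : A.mulVec x = b := by
      funext i
      have key : A.mulVec x i = AL.mulVec x i + t i * (AU.mulVec x i - AL.mulVec x i) := by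
        simp only [hAdef, mulVec, dotProduct, add_mul, mul_assoc,
          Finset.sum_add_distrib, ← Finset.mul_sum, sub_mul, Finset.sum_sub_distrib,
          mul_sub]
      rw [key]
      by_cases hd : AU.mulVec x i - AL.mulVec x i = 0
      · have : b i = AL.mulVec x i := le_antisymm (by have := hbAU i; linarith) (hbAL i)
        simp [htdef, hd, this]
      · simp only [htdef, hd, if_false]
        field_simp
        ring
    have hself : primalValA A b cL ∈ {v : EReal | ∃ A b c, memI AL AU A ∧ bL ≤ b ∧
        b ≤ bU ∧ cL ≤ c ∧ c ≤ cU ∧ v = primalValA A b c} :=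
      ⟨A, b, cL, hmem, hbL, hbU, le_refl _, hc, rfl⟩
    refine le_trans (sInf_le hself) ?_
    exact sInf_le ⟨x, ⟨hAx, hx⟩, rfl⟩
  · -- RHS ≤ LHS
    apply le_sInf
    rintro v ⟨A, b, c, hA', hbl, hbu, hcl, _, rfl⟩
    apply le_sInf
    rintro w ⟨x, ⟨hAx, hx⟩, rfl⟩
    have hALx : AL.mulVec x ≤ bU := by
      intro i
      calc AL.mulVec x i ≤ A.mulVec x i := dot_mono (fun j => (hA' i j).1) hx
        _ = b i := by rw [hAx]
        _ ≤ bU i := hbu i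
    have hAUx : -(AU.mulVec x) ≤ -bL := by
      intro i
      have : bL i ≤ AU.mulVec x i := by
        calc bL i ≤ b i := hbl i
          _ = A.mulVec x i := by rw [hAx]
          _ ≤ AU.mulVec x i := dot_mono (fun j => (hA' i j).2) hx
      simpa using this
    refine sInf_le_of_le ⟨x, ⟨hALx, hAUx, hx⟩, rfl⟩ ?_
    simp only []
    exact_mod_cast dot_mono hcl hx
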